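/- For every R > 0 and λ > 0, the partial derivative with respect to R of ψ(s,R) = (√λ R / sinh(√λ R)) · (sinh(s √λ R)/(s √λ R)) is strictly negative for every s ∈ (0,1); equivalently, for fixed s ∈ (0,1), the map R ↦ (R/sinh(√λ R)) · (sinh(s√λ R)/(s R)) is strictly decreasing on (0, ∞). -/

import Mathlib

open Real Set

lemma key_ineq (s : ℝ) (hs0 : 0 < s) (hs1 : s < 1) :
    ∀ x : ℝ, 0 < x →
      s * Real.cosh (s * x) * Real.sinh x < Real.sinh (s * x) * Real.cosh x := by
  intro x hx
  set F : ℝ → ℝ := fun y =>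
    Real.sinh (s * y) * Real.cosh y - s * Real.cosh (s * y) * Real.sinh y with hF
  have hder : ∀ y : ℝ, HasDerivAt F ((1 - s ^ 2) * (Real.sinh (s * y) * Real.sinh y)) y := by
    intro y
    have hsy : HasDerivAt (fun y : ℝ => s * y) s y := by
      simpa using (hasDerivAt_id y).const_mul s
    have h1 : HasDerivAt (fun y : ℝ => Real.sinh (s * y)) (Real.cosh (s * y) * s) y :=
      (Real.hasDerivAt_sinh (s * y)).comp y hsy
    have h2 : HasDerivAt (fun y : ℝ => Real.cosh (s * y)) (Real.sinh (s * y) * s) y :=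
      (Real.hasDerivAt_cosh (s * y)).comp y hsy
    have h3 : HasDerivAt Real.sinh (Real.cosh y) y := Real.hasDerivAt_sinh y
    have h4 : HasDerivAt Real.cosh (Real.sinh y) y := Real.hasDerivAt_cosh y
    have := (h1.mul h4).sub (((h2.const_mul s).mul h3))
    exact this.congr_deriv (by ring)
  have hmono : StrictMonoOn F (Set.Ici (0:ℝ)) := by
    apply strictMonoOn_of_deriv_pos (convex_Ici 0)
    · exact (Continuous.continuousOn (by fun_prop))
    · intro y hy
      rw [interior_Ici] at hy
      rw [(hder y).deriv]
      have h1 : 0 < Real.sinh (s * y) := Real.sinh_pos_iff.mpr (mul_pos hs0 hy)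
      have h2 : 0 < Real.sinh y := Real.sinh_pos_iff.mpr hy
      have h3 : 0 < 1 - s ^ 2 := by nlinarith
      exact mul_pos h3 (mul_pos h1 h2)
  have h0 : F 0 = 0 := by simp [hF]
  have := hmono (Set.self_mem_Ici) (Set.mem_Ici.mpr hx.le) hx
  rw [h0] at this
  simp only [hF] at this
  linarith

theorem stmt_5 (l : ℝ) (hl : 0 < l) (s : ℝ) (hs : s ∈ Set.Ioo (0:ℝ) 1) :
    (∀ R : ℝ, 0 < R →
      deriv (fun R : ℝ =>
        (Real.sqrt l * R / Real.sinh (Real.sqrt l * R)) *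
          (Real.sinh (s * Real.sqrt l * R) / (s * Real.sqrt l * R))) R < 0) ∧
    StrictAntiOn
      (fun R : ℝ => (R / Real.sinh (Real.sqrt l * R)) *
        (Real.sinh (s * Real.sqrt l * R) / (s * R))) (Set.Ioi 0) := by
  obtain ⟨hs0, hs1⟩ := hs
  set a : ℝ := Real.sqrt l with ha
  have hap : 0 < a := Real.sqrt_pos.mpr hl
  set g : ℝ → ℝ := fun R => Real.sinh (s * a * R) / (s * Real.sinh (a * R)) with hg
  -- derivative of g
  have hgd : ∀ R : ℝ, 0 < R → HasDerivAt g
      ((s * a * Real.cosh (s * a * R) * (s * Real.sinh (a * R)) -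
        Real.sinh (s * a * R) * (s * (a * Real.cosh (a * R)))) / (s * Real.sinh (a * R)) ^ 2) R := by
    intro R hR
    have h1 : HasDerivAt (fun R : ℝ => Real.sinh (s * a * R)) (Real.cosh (s * a * R) * (s * a)) R :=
      (Real.hasDerivAt_sinh (s * a * R)).comp R (by simpa using (hasDerivAt_id R).const_mul (s*a))
    have h2 : HasDerivAt (fun R : ℝ => s * Real.sinh (a * R)) (s * (Real.cosh (a * R) * a)) R :=
      (((Real.hasDerivAt_sinh (a * R)).comp R
        (by simpa using (hasDerivAt_id R).const_mul a))).const_mul s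
    have hne : s * Real.sinh (a * R) ≠ 0 := by
      have := Real.sinh_pos_iff.mpr (mul_pos hap hR)
      positivity
    have := h1.div h2 hne
    exact this.congr_deriv (by ring)
  have hgneg : ∀ R : ℝ, 0 < R →
      (s * a * Real.cosh (s * a * R) * (s * Real.sinh (a * R)) -
        Real.sinh (s * a * R) * (s * (a * Real.cosh (a * R)))) / (s * Real.sinh (a * R)) ^ 2 < 0 := by
    intro R hR
    have hkey := key_ineq s hs0 hs1 (a * R) (mul_pos hap hR)
    have hpos : 0 < (s * Real.sinh (a * R)) ^ 2 := by
      have := Real.sinh_pos_iff.mpr (mul_pos hap hR)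
      positivity
    apply div_neg_of_neg_of_pos _ hpos
    rw [← mul_assoc] at hkey
    have hlt : s * Real.cosh (s * a * R) * Real.sinh (a * R) -
        Real.sinh (s * a * R) * Real.cosh (a * R) < 0 := by linarith
    have h6 := mul_neg_of_pos_of_neg (mul_pos hs0 hap) hlt
    nlinarith [h6]
  have key1 : ∀ R : ℝ, 0 < R →
      deriv (fun R : ℝ =>
        (a * R / Real.sinh (a * R)) * (Real.sinh (s * a * R) / (s * a * R))) R < 0 := by
    intro R hR
    have heq : (fun R : ℝ =>
        (a * R / Real.sinh (a * R)) * (Real.sinh (s * a * R) / (s * a * R))) =ᶠ[nhds R] g := by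
      filter_upwards [isOpen_Ioi.mem_nhds hR] with y hy
      have hy' : (0:ℝ) < y := hy
      have hsy : Real.sinh (a * y) ≠ 0 := ne_of_gt (Real.sinh_pos_iff.mpr (mul_pos hap hy'))
      simp only [hg]
      field_simp
    rw [heq.deriv_eq, (hgd R hR).deriv]
    exact hgneg R hR
  constructor
  · exact key1
  · have heqg : ∀ y ∈ Set.Ioi (0:ℝ),
        (y / Real.sinh (a * y)) * (Real.sinh (s * a * y) / (s * y)) = g y := by
      intro y hy
      have hy' : (0:ℝ) < y := hy
      have hsy : Real.sinh (a * y) ≠ 0 := ne_of_gt (Real.sinh_pos_iff.mpr (mul_pos hap hy'))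
      simp only [hg]
      field_simp
    apply strictAntiOn_of_deriv_neg (convex_Ioi 0)
    · apply ContinuousOn.mul
      · apply ContinuousOn.div continuousOn_id (by fun_prop)
        intro y hy
        exact ne_of_gt (Real.sinh_pos_iff.mpr (mul_pos hap hy))
      · apply ContinuousOn.div (by fun_prop) (by fun_prop)
        intro y hy
        have : (0:ℝ) < y := hy
        positivity
    · intro R hR
      rw [interior_Ioi] at hR
      have heq : (fun y : ℝ =>
          (y / Real.sinh (a * y)) * (Real.sinh (s * a * y) / (s * y))) =ᶠ[nhds R] g := by
        filter_upwards [isOpen_Ioi.mem_nhds hR] with y hy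
        exact heqg y hy
      rw [heq.deriv_eq, (hgd R hR).deriv]
      exact hgneg R hR
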